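/- Let n be a non-negative integer and d = 2^n. Let b_1, b_2, c_1, c_2, x_1, x_2 ∈ ℝ^d and set b = (b_1; b_2), c = (c_1; c_2), x = (x_1; x_2) ∈ ℝ^{2d} (vertical concatenation). Then the componentwise inequality b ≤ A_{n+1} x ≤ c holds if and only if both: (1) (b_1 + b_2)/2 ≤ A_n x_1 ≤ (c_1 + c_2)/2, and (2) D_n^{-1} max(b_1 − A_n x_1, −c_2 + A_n x_1) ≤ A_n x_2 ≤ D_n^{-1} min(c_1 − A_n x_1, −b_2 + A_n x_1), where max and min are taken componentwise and all inequalities between vectors are componentwise. -/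
import Mathlib


/-- σ(n,k) from the paper: σ(0,1)=1 and, with d = 2^n, σ(n+1,k)=σ(n,k) for 1 ≤ k ≤ d,
σ(n+1,k)=2d+1−σ(n,k−d) for d+1 ≤ k ≤ 2d. -/
def sigmaCF : ℕ → ℕ → ℤ
  | 0, _ => 1
  | n + 1, k => if k ≤ 2 ^ n then sigmaCF n k else 2 * 2 ^ n + 1 - sigmaCF n (k - 2 ^ n)

/-- ξ_{n,k} = 2 cos(π(2σ(n,k) − 1)/2^{n+1}). -/
noncomputable def xiCF (n k : ℕ) : ℝ :=
  2 * Real.cos (Real.pi * (2 * (sigmaCF n k : ℝ) - 1) / 2 ^ (n + 1))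

/-- D_n = diag(ξ_{n+1,1}, …, ξ_{n+1,2^n}). -/
noncomputable def DCF (n : ℕ) : Matrix (Fin (2 ^ n)) (Fin (2 ^ n)) ℝ :=
  Matrix.diagonal fun i => xiCF (n + 1) (i.val + 1)

/-- A_0 = (1), A_{n+1} = [[A_n, D_n A_n], [A_n, −D_n A_n]]. -/
noncomputable def ACF : (n : ℕ) → Matrix (Fin (2 ^ n)) (Fin (2 ^ n)) ℝ
  | 0 => 1
  | n + 1 =>
    Matrix.reindex (finSumFinEquiv.trans (finCongr (by rw [pow_succ, mul_two])))
      (finSumFinEquiv.trans (finCongr (by rw [pow_succ, mul_two])))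
      (Matrix.fromBlocks (ACF n) (DCF n * ACF n) (ACF n) (-(DCF n * ACF n)))

/-- Vertical concatenation (x; y) of two vectors of length 2^n. -/
def vcat {α : Type*} {n : ℕ} (x y : Fin (2 ^ n) → α) : Fin (2 ^ (n + 1)) → α :=
  fun i => Fin.append x y (finCongr (by rw [pow_succ, mul_two]) i)

/- ### Auxiliary lemmas -/

lemma sigmaCF_bounds (n : ℕ) : ∀ k, 1 ≤ k → k ≤ 2 ^ n →
    1 ≤ sigmaCF n k ∧ sigmaCF n k ≤ 2 ^ n := by
  induction n with
  | zero => intro k h1 h2; simp [sigmaCF]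
  | succ n ih =>
    intro k h1 h2
    have hpow : (2:ℕ) ^ (n + 1) = 2 ^ n + 2 ^ n := by ring
    have hpowZ : (2:ℤ) ^ (n + 1) = 2 ^ n + 2 ^ n := by ring
    have hposZ : (1:ℤ) ≤ 2 ^ n := by exact_mod_cast Nat.one_le_two_pow
    rw [sigmaCF]
    split_ifs with h
    · obtain ⟨a, b⟩ := ih k h1 h
      exact ⟨a, by linarith⟩
    · push_neg at h
      obtain ⟨a, b⟩ := ih (k - 2 ^ n) (by omega) (by omega)
      constructor <;> linarith

lemma xiCF_pos (n k : ℕ) (h1 : 1 ≤ k) (h2 : k ≤ 2 ^ n) : 0 < xiCF (n + 1) k := by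
  obtain ⟨a, b⟩ := sigmaCF_bounds n k h1 h2
  have hs : sigmaCF (n + 1) k = sigmaCF n k := by rw [sigmaCF]; simp [h2]
  have hpi := Real.pi_pos
  have ha : (1:ℝ) ≤ (sigmaCF n k : ℝ) := by exact_mod_cast a
  have hb : (sigmaCF n k : ℝ) ≤ 2 ^ n := by exact_mod_cast b
  have h2n : (0:ℝ) < 2 ^ (n + 1 + 1) := by positivity
  have hs0 : (0:ℝ) < 2 * (sigmaCF n k : ℝ) - 1 := by linarith
  unfold xiCF
  rw [hs]
  have hcos : 0 < Real.cos (Real.pi * (2 * (sigmaCF n k : ℝ) - 1) / 2 ^ (n + 1 + 1)) := by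
    apply Real.cos_pos_of_mem_Ioo
    constructor
    · have := div_pos (mul_pos hpi hs0) h2n
      linarith
    · rw [div_lt_div_iff₀ h2n two_pos]
      have e : (2:ℝ) ^ (n + 1 + 1) = 4 * 2 ^ n := by ring
      nlinarith [mul_le_mul_of_nonneg_left hb hpi.le]
  linarith

/-- The reindexing equivalence used in the definition of `ACF`. -/
def eCF (n : ℕ) : (Fin (2 ^ n) ⊕ Fin (2 ^ n)) ≃ Fin (2 ^ (n + 1)) :=
  finSumFinEquiv.trans (finCongr (by rw [pow_succ, mul_two]))

lemma vcat_eq {α : Type*} {n : ℕ} (x y : Fin (2 ^ n) → α) :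
    vcat x y = Sum.elim x y ∘ (eCF n).symm := by
  funext j
  have key : ∀ s : Fin (2 ^ n) ⊕ Fin (2 ^ n),
      Fin.append x y (finSumFinEquiv s) = Sum.elim x y s := by
    rintro (i | i)
    · simp
    · have h : finSumFinEquiv (Sum.inr i) = Fin.natAdd (2 ^ n) i := by
        ext; simp [Nat.add_comm]
      rw [h, Fin.append_right, Sum.elim_inr]
  have : vcat x y j = Fin.append x y (finSumFinEquiv (finSumFinEquiv.symm
      (finCongr (by rw [pow_succ, mul_two] : 2 ^ n + 2 ^ n = 2 ^ (n + 1)).symm j))) := by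
    rw [Equiv.apply_symm_apply]; rfl
  rw [this, key]
  rfl

lemma vcat_le {n : ℕ} (u v u' v' : Fin (2 ^ n) → ℝ) :
    vcat u v ≤ vcat u' v' ↔ u ≤ u' ∧ v ≤ v' := by
  rw [vcat_eq, vcat_eq]
  constructor
  · intro h
    constructor <;> intro i
    · have := h (eCF n (Sum.inl i)); simpa using this
    · have := h (eCF n (Sum.inr i)); simpa using this
  · rintro ⟨h1, h2⟩ j
    rcases hs : (eCF n).symm j with i | i <;> simp only [Function.comp_apply, hs, Sum.elim_inl,
      Sum.elim_inr]
    · exact h1 i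
    · exact h2 i

lemma ACF_succ_mulVec (n : ℕ) (x₁ x₂ : Fin (2 ^ n) → ℝ) :
    (ACF (n + 1)).mulVec (vcat x₁ x₂) =
      vcat (fun i => (ACF n).mulVec x₁ i + xiCF (n + 1) (i.val + 1) * (ACF n).mulVec x₂ i)
        (fun i => (ACF n).mulVec x₁ i - xiCF (n + 1) (i.val + 1) * (ACF n).mulVec x₂ i) := by
  have hA : ACF (n + 1) = Matrix.reindex (eCF n) (eCF n)
      (Matrix.fromBlocks (ACF n) (DCF n * ACF n) (ACF n) (-(DCF n * ACF n))) := by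
    rw [ACF]; rfl
  rw [hA, Matrix.reindex_apply, vcat_eq,
    Matrix.submatrix_mulVec_equiv _ _ _ (eCF n).symm]
  rw [vcat_eq]
  have hcomp : (Sum.elim x₁ x₂ ∘ ⇑(eCF n).symm) ∘ ⇑(eCF n).symm.symm = Sum.elim x₁ x₂ := by
    funext s; simp
  rw [hcomp, Matrix.fromBlocks_mulVec]
  simp only [Sum.elim_comp_inl, Sum.elim_comp_inr]
  have hElim : Sum.elim ((ACF n).mulVec x₁ + (DCF n * ACF n).mulVec x₂)
      ((ACF n).mulVec x₁ + (-(DCF n * ACF n)).mulVec x₂) =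
      Sum.elim (fun i => (ACF n).mulVec x₁ i + xiCF (n + 1) (i.val + 1) * (ACF n).mulVec x₂ i)
        (fun i => (ACF n).mulVec x₁ i - xiCF (n + 1) (i.val + 1) * (ACF n).mulVec x₂ i) := by
    funext s
    rcases s with i | i
    · simp only [Sum.elim_inl, Pi.add_apply, ← Matrix.mulVec_mulVec, DCF,
        Matrix.mulVec_diagonal]
    · simp only [Sum.elim_inr, Pi.add_apply, ← Matrix.mulVec_mulVec, Matrix.neg_mulVec,
        Pi.neg_apply, DCF, Matrix.mulVec_diagonal]
      ring
  rw [hElim]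

lemma DCF_inv_mulVec (n : ℕ) (f : Fin (2 ^ n) → ℝ) :
    (DCF n)⁻¹.mulVec f = fun i => (xiCF (n + 1) (i.val + 1))⁻¹ * f i := by
  have hd : ∀ i : Fin (2 ^ n), xiCF (n + 1) (i.val + 1) ≠ 0 := fun i =>
    (xiCF_pos n (i.val + 1) (by omega) (by omega)).ne'
  have hinv : (DCF n)⁻¹ = Matrix.diagonal fun i : Fin (2 ^ n) => (xiCF (n + 1) (i.val + 1))⁻¹ := by
    apply Matrix.inv_eq_left_inv
    rw [DCF, Matrix.diagonal_mul_diagonal, ← Matrix.diagonal_one]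
    have : (fun i : Fin (2 ^ n) => (xiCF (n + 1) (i.val + 1))⁻¹ * xiCF (n + 1) (i.val + 1)) =
        fun _ => (1:ℝ) := by
      funext i; exact inv_mul_cancel₀ (hd i)
    rw [this]

  rw [hinv]
  funext i
  rw [Matrix.mulVec_diagonal]

lemma pointwise_key (d a t b1 b2 c1 c2 : ℝ) (hd : 0 < d) :
    ((b1 ≤ a + d * t ∧ b2 ≤ a - d * t) ∧ a + d * t ≤ c1 ∧ a - d * t ≤ c2) ↔
      ((b1 + b2) / 2 ≤ a ∧ a ≤ (c1 + c2) / 2 ∧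
        d⁻¹ * max (b1 - a) (-c2 + a) ≤ t ∧ t ≤ d⁻¹ * min (c1 - a) (-b2 + a)) := by
  have h1 : d⁻¹ * max (b1 - a) (-c2 + a) ≤ t ↔ (b1 - a ≤ d * t ∧ -c2 + a ≤ d * t) := by
    rw [inv_mul_le_iff₀ hd, max_le_iff]
  have h2 : t ≤ d⁻¹ * min (c1 - a) (-b2 + a) ↔ (d * t ≤ c1 - a ∧ d * t ≤ -b2 + a) := by
    rw [le_inv_mul_iff₀ hd, le_min_iff]
  rw [h1, h2]
  constructor
  · rintro ⟨⟨p, q⟩, r, s⟩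
    exact ⟨by linarith, by linarith, ⟨by linarith, by linarith⟩, by linarith, by linarith⟩
  · rintro ⟨_, _, ⟨p, q⟩, r, s⟩
    exact ⟨⟨by linarith, by linarith⟩, by linarith, by linarith⟩

/-- The componentwise inequality `b ≤ A_{n+1} x ≤ c`, with `b = (b₁; b₂)`, `c = (c₁; c₂)`,
`x = (x₁; x₂)`, holds iff `(b₁+b₂)/2 ≤ A_n x₁ ≤ (c₁+c₂)/2` and
`D_n⁻¹ max(b₁ − A_n x₁, −c₂ + A_n x₁) ≤ A_n x₂ ≤ D_n⁻¹ min(c₁ − A_n x₁, −b₂ + A_n x₁)`,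
where `max`, `min` and all inequalities are componentwise. -/
theorem ACF_box_iff (n : ℕ) (b₁ b₂ c₁ c₂ x₁ x₂ : Fin (2 ^ n) → ℝ) :
    (vcat b₁ b₂ ≤ (ACF (n + 1)).mulVec (vcat x₁ x₂) ∧
        (ACF (n + 1)).mulVec (vcat x₁ x₂) ≤ vcat c₁ c₂) ↔
      ((fun i => (b₁ i + b₂ i) / 2) ≤ (ACF n).mulVec x₁ ∧
        (ACF n).mulVec x₁ ≤ (fun i => (c₁ i + c₂ i) / 2) ∧
        (DCF n)⁻¹.mulVec
            (fun i => max (b₁ i - (ACF n).mulVec x₁ i) (-c₂ i + (ACF n).mulVec x₁ i)) ≤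
          (ACF n).mulVec x₂ ∧
        (ACF n).mulVec x₂ ≤
          (DCF n)⁻¹.mulVec
            (fun i => min (c₁ i - (ACF n).mulVec x₁ i) (-b₂ i + (ACF n).mulVec x₁ i))) := by
  rw [ACF_succ_mulVec, vcat_le, vcat_le, DCF_inv_mulVec, DCF_inv_mulVec]
  simp only [Pi.le_def]
  rw [← forall_and, ← forall_and, ← forall_and, ← forall_and, ← forall_and, ← forall_and]
  apply forall_congr'
  intro i
  exact pointwise_key _ _ _ _ _ _ _ (xiCF_pos n (i.val + 1) (by omega) (by omega))
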